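/- arXiv:2605.18308 — 3 statements merged into one kernel-verified Lean document; each statement's English description precedes it below -/
import Mathlib

section
/- For all real p ∈ (1/2, 1), min{p/(1+2p), (−1+3p−p²)/(2(3p−1))} − min{p/3, 1−p} ≥ 1/40. -/
theorem path4_vs_min (p : ℝ) (hp : p ∈ Set.Ioo (1 / 2 : ℝ) 1) :
    min (p / (1 + 2 * p)) ((-1 + 3 * p - p ^ 2) / (2 * (3 * p - 1))) - min (p / 3) (1 - p)
      ≥ 1 / 40 := by
  obtain ⟨h1, h2⟩ := hp
  have hd1 : (0:ℝ) < 1 + 2 * p := by linarith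
  have hd2 : (0:ℝ) < 2 * (3 * p - 1) := by linarith
  rcases le_total p (3/4) with h | h
  · have hmin : min (p / 3) (1 - p) = p / 3 := min_eq_left (by linarith)
    rw [hmin]
    have hA : p / 3 + 1 / 40 ≤ p / (1 + 2 * p) := by
      rw [le_div_iff₀ hd1]; nlinarith
    have hB : p / 3 + 1 / 40 ≤ (-1 + 3 * p - p ^ 2) / (2 * (3 * p - 1)) := by
      rw [le_div_iff₀ hd2]; nlinarith
    have := le_min hA hB
    linarith
  · have hmin : min (p / 3) (1 - p) = 1 - p := min_eq_right (by linarith)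
    rw [hmin]
    have hA : (1 - p) + 1 / 40 ≤ p / (1 + 2 * p) := by
      rw [le_div_iff₀ hd1]; nlinarith
    have hB : (1 - p) + 1 / 40 ≤ (-1 + 3 * p - p ^ 2) / (2 * (3 * p - 1)) := by
      rw [le_div_iff₀ hd2]; nlinarith
    have := le_min hA hB
    linarith
end

section
/- Let t ≥ 1 be an integer and p ∈ (1/2, 1). Set g = p(1−p) + (2p−1)p²/(t + 2p − 1). If c and the common leaf weight x satisfy the system (1−p−g)/(1−p) + ((2p−1)/(1−p))·c = 1 − c and (1−p−g)/(1−p) + ((2p−1)/(1−p))·(1−c)/t = c, then c = (1 − (1−p−g)/(1−p))/(1 + (2p−1)/(1−p)) and the system is consistent; in particular g = p(1−p) + (2p−1)p²/(t+2p−1) is the unique solution of (1−p−g)/(1−p) = (t − P²)/(tP + 2t + P) where P = (2p−1)/(1−p). -/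
theorem star_g_function (t : ℕ) (ht : 1 ≤ t) (p : ℝ) (hp : p ∈ Set.Ioo (1 / 2 : ℝ) 1) :
    let P : ℝ := (2 * p - 1) / (1 - p)
    let g : ℝ := p * (1 - p) + (2 * p - 1) * p ^ 2 / ((t : ℝ) + 2 * p - 1)
    let G : ℝ := (1 - p - g) / (1 - p)
    (∀ c : ℝ, (G + P * c = 1 - c ∧ G + P * ((1 - c) / (t : ℝ)) = c) →
        c = (1 - G) / (1 + P)) ∧
    (∃ c : ℝ, G + P * c = 1 - c ∧ G + P * ((1 - c) / (t : ℝ)) = c) ∧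
    (∀ g' : ℝ, (1 - p - g') / (1 - p)
        = ((t : ℝ) - P ^ 2) / ((t : ℝ) * P + 2 * (t : ℝ) + P) ↔ g' = g) := by
  obtain ⟨hp1, hp2⟩ := hp
  intro P g G
  have ht1 : (1:ℝ) ≤ (t:ℝ) := by exact_mod_cast ht
  have h1p : (0:ℝ) < 1 - p := by linarith
  have h2p : (0:ℝ) < 2 * p - 1 := by linarith
  have htp : (0:ℝ) < (t:ℝ) + 2 * p - 1 := by linarith
  have ht0 : (0:ℝ) < (t:ℝ) := by linarith
  have hPdef : P = (2 * p - 1) / (1 - p) := rfl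
  have hPpos : 0 < P := div_pos h2p h1p
  have h1P : (0:ℝ) < 1 + P := by linarith
  have hD : (0:ℝ) < (t:ℝ) * P + 2 * (t:ℝ) + P := by
    have := mul_pos ht0 hPpos; linarith
  have hGdef : G = ((1 - p) ^ 2 * ((t:ℝ) + 2 * p - 1) - (2 * p - 1) * p ^ 2)
      / (((t:ℝ) + 2 * p - 1) * (1 - p)) := by
    show (1 - p - (p * (1 - p) + (2 * p - 1) * p ^ 2 / ((t:ℝ) + 2 * p - 1))) / (1 - p) = _
    field_simp [show (t:ℝ) + p * 2 - 1 ≠ 0 by linarith, htp.ne']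
    ring
  have hgdef : g * ((t:ℝ) + 2 * p - 1)
      = p * (1 - p) * ((t:ℝ) + 2 * p - 1) + (2 * p - 1) * p ^ 2 := by
    show (p * (1 - p) + (2 * p - 1) * p ^ 2 / ((t:ℝ) + 2 * p - 1)) * _ = _
    field_simp [show (t:ℝ) + p * 2 - 1 ≠ 0 by linarith, htp.ne']
  have hR : ((t:ℝ) - P ^ 2) / ((t:ℝ) * P + 2 * (t:ℝ) + P)
      = ((t:ℝ) * (1 - p) ^ 2 - (2 * p - 1) ^ 2) / ((1 - p) * ((t:ℝ) + 2 * p - 1)) := by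
    rw [div_eq_div_iff hD.ne' (by positivity), hPdef]
    field_simp
    ring
  clear_value P g G
  refine ⟨?_, ⟨((t:ℝ) * (1 - p) + 2 * p - 1) / ((t:ℝ) + 2 * p - 1), ?_, ?_⟩, ?_⟩
  · rintro c ⟨h1, h2⟩
    rw [eq_div_iff h1P.ne']
    linear_combination h1
  · rw [hGdef, hPdef]
    field_simp [show (t:ℝ) + p * 2 - 1 ≠ 0 by linarith, htp.ne']
    ring
  · rw [hGdef, hPdef]
    field_simp [show (t:ℝ) + p * 2 - 1 ≠ 0 by linarith, htp.ne']
    ring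
  · intro g'
    rw [hR, div_eq_div_iff h1p.ne' (by positivity)]
    constructor
    · intro h
      have h2 : (g' - g) * ((1 - p) * ((t:ℝ) + 2 * p - 1)) = 0 := by
        linear_combination (-1 : ℝ) * h + (p - 1) * hgdef
      rcases mul_eq_zero.mp h2 with h3 | h3
      · linarith
      · exfalso; nlinarith
    · rintro rfl
      linear_combination (-(1:ℝ) + p) * hgdef
end

section
/- For every integer t ≥ 1, every integer t' with 1 ≤ t' ≤ t, and every real p ∈ (1/2, 1): [p(1−p) + (2p−1)p²/(t+2p−1)] − [1−p + (2p−1)/t'] < 0. -/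
theorem star_vs_subCRG (t : ℕ) (ht : 1 ≤ t) (t' : ℕ) (ht'1 : 1 ≤ t') (ht't : t' ≤ t)
    (p : ℝ) (hp : p ∈ Set.Ioo (1 / 2 : ℝ) 1) :
    (p * (1 - p) + (2 * p - 1) * p ^ 2 / ((t : ℝ) + 2 * p - 1))
      - (1 - p + (2 * p - 1) / (t' : ℝ)) < 0 := by
  obtain ⟨hp1, hp2⟩ := hp
  have hq : (0 : ℝ) < 2 * p - 1 := by linarith
  have ht1 : (1 : ℝ) ≤ (t : ℝ) := by exact_mod_cast ht
  have ht'pos : (0 : ℝ) < (t' : ℝ) := by exact_mod_cast ht'1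
  have ht't' : (t' : ℝ) ≤ (t : ℝ) := by exact_mod_cast ht't
  have h1 : (2 * p - 1) * p ^ 2 / ((t : ℝ) + 2 * p - 1) ≤ (2 * p - 1) / (t' : ℝ) := by
    apply div_le_div₀ hq.le _ ht'pos (by linarith)
    nlinarith [mul_nonneg hq.le (by nlinarith : (0:ℝ) ≤ 1 - p ^ 2)]
  nlinarith [sq_nonneg (1 - p)]
end
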